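/- arXiv:math-ph/0008040 — 2 statements merged into one kernel-verified Lean document; each statement's English description precedes it below -/
import Mathlib

section
/- The Fredholm index is locally constant: if F is Fredholm and B is bounded, then for all sufficiently small ε > 0, F + εB is Fredholm with Index(F + εB) = Index(F). -/
open ContinuousLinearMap

/-- A bounded operator on a (complex) Hilbert space is *Fredholm* if there exists a
bounded operator `B` such that `1 - F * B` and `1 - B * F` are compact. -/
def IsFredholm {H : Type*} [NormedAddCommGroup H] [InnerProductSpace ℂ H]
    (F : H →L[ℂ] H) : Prop :=
  ∃ B : H →L[ℂ] H,
    IsCompactOperator (⇑(1 - F * B)) ∧ IsCompactOperator (⇑(1 - B * F))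

/-- The Fredholm index `Index F = dim Ker F - dim Ker F†`. -/
noncomputable def fredholmIndex {H : Type*} [NormedAddCommGroup H]
    [InnerProductSpace ℂ H] [CompleteSpace H] (F : H →L[ℂ] H) : ℤ :=
  (Module.finrank ℂ (LinearMap.ker (F : H →ₗ[ℂ] H)) : ℤ) -
    (Module.finrank ℂ (LinearMap.ker (ContinuousLinearMap.adjoint F : H →ₗ[ℂ] H)) : ℤ)

open Submodule Module Metric
set_option synthInstance.maxHeartbeats 1000000
set_option maxHeartbeats 1000000

local notation "⟪" x ", " y "⟫" => @inner ℂ _ _ x y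

section Aux
variable {E F : Type*} [NormedAddCommGroup E] [InnerProductSpace ℂ E]
  [NormedAddCommGroup F] [InnerProductSpace ℂ F] [CompleteSpace E] [CompleteSpace F]

lemma ker_adjoint_eq (T : E →L[ℂ] F) :
    LinearMap.ker (adjoint T : F →ₗ[ℂ] E) = (LinearMap.range (T : E →ₗ[ℂ] F))ᗮ := by
  ext x
  simp only [LinearMap.mem_ker, Submodule.mem_orthogonal, ContinuousLinearMap.coe_coe]
  constructor
  · rintro h _ ⟨y, rfl⟩
    rw [inner_eq_zero_symm, ContinuousLinearMap.coe_coe, ← adjoint_inner_left, h, inner_zero_left]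
  · intro h
    have : ∀ y : E, ⟪adjoint T x, y⟫ = 0 := by
      intro y
      rw [adjoint_inner_left]
      simpa [inner_eq_zero_symm] using h (T y) ⟨y, rfl⟩
    exact ext_inner_right ℂ (by simpa using this)

end Aux

section AdjEquiv
variable {E F : Type*} [NormedAddCommGroup E] [InnerProductSpace ℂ E]
  [NormedAddCommGroup F] [InnerProductSpace ℂ F] [CompleteSpace E] [CompleteSpace F]

/-- The adjoint of a continuous linear equivalence, as an equivalence. -/
noncomputable def adjEquiv (e : E ≃L[ℂ] F) : F ≃L[ℂ] E :=
  ContinuousLinearEquiv.equivOfInverse (adjoint (e : E →L[ℂ] F)) (adjoint (e.symm : F →L[ℂ] E))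
    (fun x => by
      rw [← ContinuousLinearMap.comp_apply, ← adjoint_comp]
      have h : (e : E →L[ℂ] F) ∘L (e.symm : F →L[ℂ] E) = ContinuousLinearMap.id ℂ F := by
        ext z; simp
      rw [h, adjoint_id, ContinuousLinearMap.id_apply])
    (fun x => by
      rw [← ContinuousLinearMap.comp_apply, ← adjoint_comp]
      have h : (e.symm : F →L[ℂ] E) ∘L (e : E →L[ℂ] F) = ContinuousLinearMap.id ℂ E := by
        ext z; simp
      rw [h, adjoint_id, ContinuousLinearMap.id_apply])

@[simp] lemma adjEquiv_coe (e : E ≃L[ℂ] F) :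
    (adjEquiv e : F →L[ℂ] E) = adjoint (e : E →L[ℂ] F) := rfl

@[simp] lemma adjEquiv_symm_coe (e : E ≃L[ℂ] F) :
    ((adjEquiv e).symm : E →L[ℂ] F) = adjoint (e.symm : F →L[ℂ] E) := rfl

end AdjEquiv

section Blocks
variable {H : Type*} [NormedAddCommGroup H] [InnerProductSpace ℂ H] [CompleteSpace H]

/-- The block of `A` from `P` to `Q`. -/
noncomputable def blk (P Q : Submodule ℂ H) [HasOrthogonalProjection Q] (A : H →L[ℂ] H) :
    P →L[ℂ] Q :=
  (orthogonalProjection Q).comp (A.comp P.subtypeL)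

lemma blk_apply (P Q : Submodule ℂ H) [HasOrthogonalProjection Q] (A : H →L[ℂ] H) (x : P) :
    blk P Q A x = orthogonalProjection Q (A x) := rfl

lemma blk_adjoint (P Q : Submodule ℂ H) [HasOrthogonalProjection P] [HasOrthogonalProjection Q]
    [CompleteSpace P] [CompleteSpace Q] (A : H →L[ℂ] H) :
    adjoint (blk P Q A) = blk Q P (adjoint A) := by
  refine ContinuousLinearMap.ext fun q => ?_
  refine ext_inner_right ℂ fun p => ?_
  have h3 : ⟪(q:H), A ↑p - ↑(orthogonalProjection Q (A ↑p))⟫ = 0 :=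
    (Submodule.mem_orthogonal _ _).mp (sub_starProjection_mem_orthogonal (K := Q) (A ↑p)) q q.2
  have h5 : ⟪(adjoint A ↑q - ↑(orthogonalProjection P (adjoint A ↑q)) : H), (↑p : H)⟫ = 0 := by
    rw [inner_eq_zero_symm]
    exact (Submodule.mem_orthogonal _ _).mp
      (sub_starProjection_mem_orthogonal (K := P) (adjoint A ↑q)) p p.2
  calc ⟪((adjoint (blk P Q A)) q : ↥P), p⟫ = ⟪q, (blk P Q A) p⟫ := adjoint_inner_left _ _ _
    _ = ⟪(q:H), (↑(orthogonalProjection Q (A ↑p)) : H)⟫ := rfl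
    _ = ⟪(q:H), A ↑p⟫ := by
        rw [inner_sub_right] at h3; linear_combination -h3
    _ = ⟪(adjoint A ↑q : H), (↑p : H)⟫ := (adjoint_inner_left A ↑p ↑q).symm
    _ = ⟪(↑(orthogonalProjection P (adjoint A ↑q)) : H), (↑p : H)⟫ := by
        rw [inner_sub_left] at h5; linear_combination h5
    _ = ⟪((blk Q P (adjoint A)) q : ↥P), p⟫ := rfl

/-- Schur complement of the block decomposition of `A`. -/
noncomputable def schur (N M R W : Submodule ℂ H) [HasOrthogonalProjection R]
    [HasOrthogonalProjection W] (A : H →L[ℂ] H) (e : M ≃L[ℂ] R) : N →L[ℂ] W :=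
  blk N W A - (blk M W A) ∘L (e.symm : R →L[ℂ] M) ∘L blk N R A

lemma proj_decomp (R W : Submodule ℂ H) (hW : W = Rᗮ) [HasOrthogonalProjection R]
    [HasOrthogonalProjection W] (z : H) :
    (↑(orthogonalProjection R z) : H) + ↑(orthogonalProjection W z) = z := by
  subst hW
  show (↑(R.orthogonalProjectionOnto z) : H) + ↑(Rᗮ.orthogonalProjectionOnto z) = z
  rw [orthogonalProjectionOnto_orthogonal]
  simp only [starProjection_apply]
  abel

lemma finrank_ker_eq_schur (N M R W : Submodule ℂ H) (hM : M = Nᗮ) (hW : W = Rᗮ)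
    [HasOrthogonalProjection N] [HasOrthogonalProjection R] [HasOrthogonalProjection M]
    [HasOrthogonalProjection W] (A : H →L[ℂ] H) (e : M ≃L[ℂ] R)
    (he : ∀ x : M, e x = orthogonalProjection R (A x)) :
    finrank ℂ (LinearMap.ker (A : H →ₗ[ℂ] H)) = finrank ℂ (LinearMap.ker (schur N M R W A e : N →ₗ[ℂ] W)) := by
  subst hM; subst hW
  set S := schur N Nᗮ R Rᗮ A e with hS
  have key1 : ∀ (n : N) (m : Nᗮ), orthogonalProjection R (A (↑n + ↑m)) = blk N R A n + e m := by
    intro n m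
    rw [map_add A, map_add (orthogonalProjection R), he m]
    rfl
  have key2 : ∀ (n : N) (m : Nᗮ),
      orthogonalProjection Rᗮ (A (↑n + ↑m)) = blk N Rᗮ A n + blk Nᗮ Rᗮ A m := by
    intro n m
    rw [map_add A, map_add (orthogonalProjection Rᗮ)]
    rfl
  have hAzero : ∀ (n : N) (m : Nᗮ), A (↑n + ↑m) = 0 ↔
      (blk N R A n + e m = 0 ∧ blk N Rᗮ A n + blk Nᗮ Rᗮ A m = 0) := by
    intro n m
    constructor
    · intro h
      refine ⟨?_, ?_⟩
      · rw [← key1 n m, h, map_zero]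
      · rw [← key2 n m, h, map_zero]
    · rintro ⟨h1, h2⟩
      have hpd := proj_decomp R Rᗮ rfl (A (↑n + ↑m))
      rw [key1 n m, key2 n m, h1, h2] at hpd
      simpa using hpd.symm
  have memS : ∀ y : H, A y = 0 → S (orthogonalProjection N y) = 0 := by
    intro y hy
    have hd : (↑(orthogonalProjection N y) : H) + ↑(orthogonalProjection Nᗮ y) = y :=
      proj_decomp N Nᗮ rfl y
    set n := orthogonalProjection N y with hn
    set m := orthogonalProjection Nᗮ y with hmdef
    have h0 : A (↑n + ↑m) = 0 := by rw [hd]; exact hy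
    obtain ⟨h1, h2⟩ := (hAzero n m).mp h0
    have hb : blk N R A n = -(e m) := by
      have := eq_neg_of_add_eq_zero_right h1
      rw [this, neg_neg]
    have hm : e.symm (blk N R A n) = -m := by
      rw [hb, map_neg, ContinuousLinearEquiv.symm_apply_apply]
    show blk N Rᗮ A n - (blk Nᗮ Rᗮ A) (e.symm (blk N R A n)) = 0
    rw [hm, map_neg, sub_neg_eq_add]
    exact h2
  have memA : ∀ n : N, S n = 0 → A (↑n - ↑(e.symm (blk N R A n))) = 0 := by
    intro n hn
    have h0 : (↑n - ↑(e.symm (blk N R A n)) : H) = ↑n + ↑(-(e.symm (blk N R A n))) := by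
      simp [sub_eq_add_neg]
    rw [h0, hAzero n (-(e.symm (blk N R A n)))]
    refine ⟨?_, ?_⟩
    · rw [map_neg, ContinuousLinearEquiv.apply_symm_apply]
      simp
    · rw [map_neg, ← sub_eq_add_neg]
      exact hn
  let Φ : ↥(LinearMap.ker (A : H →ₗ[ℂ] H)) →ₗ[ℂ] ↥(LinearMap.ker (S : N →ₗ[ℂ] Rᗮ)) :=
    LinearMap.codRestrict (LinearMap.ker (S : N →ₗ[ℂ] Rᗮ))
      ((orthogonalProjection N).toLinearMap.comp (LinearMap.ker (A : H →ₗ[ℂ] H)).subtype)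
      (fun y => memS ↑y y.2)
  let Ψ₀ : ↥(LinearMap.ker (S : N →ₗ[ℂ] Rᗮ)) →ₗ[ℂ] H :=
    N.subtype.comp (LinearMap.ker (S : N →ₗ[ℂ] Rᗮ)).subtype -
      Nᗮ.subtype.comp ((e.symm.toLinearEquiv.toLinearMap).comp
        ((blk N R A).toLinearMap.comp (LinearMap.ker (S : N →ₗ[ℂ] Rᗮ)).subtype))
  have hΨ₀ : ∀ n : ↥(LinearMap.ker (S : N →ₗ[ℂ] Rᗮ)), Ψ₀ n = ↑(↑n : N) - ↑(e.symm (blk N R A ↑n)) :=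
    fun n => rfl
  let Ψ : ↥(LinearMap.ker (S : N →ₗ[ℂ] Rᗮ)) →ₗ[ℂ] ↥(LinearMap.ker (A : H →ₗ[ℂ] H)) :=
    LinearMap.codRestrict (LinearMap.ker (A : H →ₗ[ℂ] H)) Ψ₀ (fun n => by
      rw [LinearMap.mem_ker, hΨ₀]
      exact memA ↑n n.2)
  have hΦΨ : ∀ n, Φ (Ψ n) = n := by
    intro n
    apply Subtype.ext
    show orthogonalProjection N (Ψ₀ n) = ↑n
    rw [hΨ₀, map_sub, orthogonalProjection_mem_subspace_eq_self,
      orthogonalProjectionOnto_apply_of_mem_orthogonal (e.symm (blk N R A ↑n)).2,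
      sub_zero]
  have hΨΦ : ∀ y, Ψ (Φ y) = y := by
    intro y
    apply Subtype.ext
    show Ψ₀ (Φ y) = ↑y
    rw [hΨ₀]
    have hd : (↑(orthogonalProjection N ↑y) : H) + ↑(orthogonalProjection Nᗮ ↑y) = ↑y :=
      proj_decomp N Nᗮ rfl ↑y
    set n := orthogonalProjection N (↑y : H) with hn
    set m := orthogonalProjection Nᗮ (↑y : H) with hmdef
    have h0 : A (↑n + ↑m) = 0 := by rw [hd]; exact y.2
    obtain ⟨h1, h2⟩ := (hAzero n m).mp h0
    have hb : blk N R A n = -(e m) := by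
      have := eq_neg_of_add_eq_zero_right h1
      rw [this, neg_neg]
    have hΦy : ((Φ y : ↥(LinearMap.ker (S : N →ₗ[ℂ] Rᗮ))) : N) = n := rfl
    rw [hΦy, hb, map_neg, ContinuousLinearEquiv.symm_apply_apply]
    push_cast
    rw [sub_neg_eq_add]
    exact hd
  exact LinearEquiv.finrank_eq
    (LinearEquiv.ofLinear Φ Ψ (LinearMap.ext hΦΨ) (LinearMap.ext hΨΦ))

lemma schur_adjoint (N R : Submodule ℂ H) [HasOrthogonalProjection N] [HasOrthogonalProjection R]
    [CompleteSpace N] [CompleteSpace R] (A : H →L[ℂ] H) (e : Nᗮ ≃L[ℂ] R) :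
    adjoint (schur N Nᗮ R Rᗮ A e) = schur Rᗮ R Nᗮ N (adjoint A) (adjEquiv e) := by
  rw [schur, schur, map_sub, adjoint_comp, adjoint_comp, blk_adjoint, blk_adjoint, blk_adjoint,
    adjEquiv_symm_coe, ContinuousLinearMap.comp_assoc]

end Blocks

section IndexEq
variable {H : Type*} [NormedAddCommGroup H] [InnerProductSpace ℂ H] [CompleteSpace H]

lemma index_eq (N R : Submodule ℂ H) [HasOrthogonalProjection N] [HasOrthogonalProjection R]
    [FiniteDimensional ℂ N] [FiniteDimensional ℂ Rᗮ] [CompleteSpace R]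
    (A : H →L[ℂ] H) (e : Nᗮ ≃L[ℂ] R)
    (he : ∀ x : Nᗮ, e x = orthogonalProjection R (A x)) :
    fredholmIndex A = (finrank ℂ N : ℤ) - finrank ℂ Rᗮ := by
  set S := schur N Nᗮ R Rᗮ A e with hS
  have h1 : finrank ℂ (LinearMap.ker (A : H →ₗ[ℂ] H)) = finrank ℂ (LinearMap.ker (S : N →ₗ[ℂ] Rᗮ)) :=
    finrank_ker_eq_schur N Nᗮ R Rᗮ rfl rfl A e he
  have hblk : blk Nᗮ R A = (e : Nᗮ →L[ℂ] R) := ContinuousLinearMap.ext fun m => (he m).symm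
  have he₂ : ∀ x : R, (adjEquiv e) x = orthogonalProjection Nᗮ ((adjoint A) x) := by
    intro x
    have : (adjEquiv e : R →L[ℂ] Nᗮ) = blk R Nᗮ (adjoint A) := by
      rw [adjEquiv_coe, ← hblk, blk_adjoint]
    calc (adjEquiv e) x = (adjEquiv e : R →L[ℂ] Nᗮ) x := rfl
      _ = blk R Nᗮ (adjoint A) x := by rw [this]
      _ = orthogonalProjection Nᗮ ((adjoint A) x) := rfl
  have h2 : finrank ℂ (LinearMap.ker (adjoint A : H →ₗ[ℂ] H)) =
      finrank ℂ (LinearMap.ker (schur Rᗮ R Nᗮ N (adjoint A) (adjEquiv e) : Rᗮ →ₗ[ℂ] N)) :=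
    finrank_ker_eq_schur Rᗮ R Nᗮ N (Submodule.orthogonal_orthogonal R).symm
      (Submodule.orthogonal_orthogonal N).symm (adjoint A) (adjEquiv e) he₂
  rw [← schur_adjoint] at h2
  have h4 : LinearMap.ker (adjoint S : Rᗮ →ₗ[ℂ] N) = (LinearMap.range (S : N →ₗ[ℂ] Rᗮ))ᗮ := ker_adjoint_eq S
  have h5 : finrank ℂ (LinearMap.range (S : N →ₗ[ℂ] Rᗮ)) + finrank ℂ ((LinearMap.range (S : N →ₗ[ℂ] Rᗮ))ᗮ) = finrank ℂ Rᗮ :=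
    Submodule.finrank_add_finrank_orthogonal _
  have h6 : finrank ℂ (LinearMap.range (S : N →ₗ[ℂ] Rᗮ)) + finrank ℂ (LinearMap.ker (S : N →ₗ[ℂ] Rᗮ)) = finrank ℂ N :=
    LinearMap.finrank_range_add_finrank_ker (S : ↥N →ₗ[ℂ] ↥Rᗮ)
  rw [fredholmIndex, h1, h2, h4]
  omega

end IndexEq

section Analytic
variable {H : Type*} [NormedAddCommGroup H] [InnerProductSpace ℂ H] [CompleteSpace H]

/-- If a compact operator acts as the identity on the (closed) kernel of `T`,
then that kernel is finite dimensional. -/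
lemma finiteDimensional_ker (T K : H →L[ℂ] H) (hK : IsCompactOperator ⇑K)
    (h : ∀ x ∈ LinearMap.ker (T : H →ₗ[ℂ] H), K x = x) :
    FiniteDimensional ℂ (LinearMap.ker (T : H →ₗ[ℂ] H)) := by
  obtain ⟨M, hMc, hKM⟩ := hK.image_closedBall_subset_compact 1
  have hball : (Subtype.val '' (closedBall (0 : LinearMap.ker (T : H →ₗ[ℂ] H)) 1)) =
      (LinearMap.ker (T : H →ₗ[ℂ] H) : Set H) ∩ closedBall (0 : H) 1 := by
    ext x
    constructor
    · rintro ⟨y, hy, rfl⟩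
      exact ⟨y.2, by simpa [dist_eq_norm] using mem_closedBall.mp hy⟩
    · rintro ⟨hx, hx1⟩
      exact ⟨⟨x, hx⟩, by simpa [dist_eq_norm, Submodule.coe_norm] using mem_closedBall.mp hx1, rfl⟩
  have hsub : (LinearMap.ker (T : H →ₗ[ℂ] H) : Set H) ∩ closedBall (0 : H) 1 ⊆ M := by
    rintro x ⟨hx, hx1⟩
    have : K x ∈ M := hKM ⟨x, hx1, rfl⟩
    rwa [h x hx] at this
  have hclosed : IsClosed ((LinearMap.ker (T : H →ₗ[ℂ] H) : Set H) ∩ closedBall (0 : H) 1) :=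
    (ContinuousLinearMap.isClosed_ker T).inter Metric.isClosed_closedBall
  have hcpt : IsCompact ((LinearMap.ker (T : H →ₗ[ℂ] H) : Set H) ∩ closedBall (0 : H) 1) :=
    hMc.of_isClosed_subset hclosed hsub
  rw [← hball] at hcpt
  have hcpt' : IsCompact (closedBall (0 : LinearMap.ker (T : H →ₗ[ℂ] H)) 1) := by
    rw [Topology.IsEmbedding.isCompact_iff (Topology.IsEmbedding.subtypeVal)]
    exact hcpt
  exact FiniteDimensional.of_isCompact_closedBall₀ ℂ one_pos hcpt'

/-- Schauder's theorem in Hilbert space: the adjoint of a compact operator is compact. -/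
lemma isCompactOperator_adjoint (T : H →L[ℂ] H) (hT : IsCompactOperator ⇑T) :
    IsCompactOperator ⇑(adjoint T) := by
  have hTT : IsCompactOperator ⇑(T ∘L adjoint T) := hT.comp_clm (adjoint T)
  suffices hh : TotallyBounded (⇑(adjoint T) '' closedBall (0:H) 1) by
    refine (isCompactOperator_iff_isCompact_closure_image_closedBall (𝕜₁ := ℂ)
      ((adjoint T).toLinearMap) one_pos).mpr ?_
    rw [isCompact_iff_totallyBounded_isComplete]
    exact ⟨hh.closure, (isClosed_closure).isComplete⟩
  -- key inequality
  have key : ∀ y z : H, ‖adjoint T y - adjoint T z‖ ^ 2 ≤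
      ‖(T ∘L adjoint T) y - (T ∘L adjoint T) z‖ * ‖y - z‖ := by
    intro y z
    have h1 : ‖adjoint T y - adjoint T z‖ ^ 2 = RCLike.re ⟪adjoint T (y - z), adjoint T (y - z)⟫ := by
      rw [map_sub, ← inner_self_eq_norm_sq (𝕜 := ℂ)]
    have h2 : ⟪adjoint T (y - z), adjoint T (y - z)⟫ = ⟪T (adjoint T (y - z)), y - z⟫ :=
      adjoint_inner_right T _ _
    have h3 : RCLike.re ⟪T (adjoint T (y - z)), y - z⟫ ≤
        ‖T (adjoint T (y - z))‖ * ‖y - z‖ := by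
      refine le_trans (RCLike.re_le_norm _) ?_
      exact norm_inner_le_norm _ _
    have h4 : T (adjoint T (y - z)) = (T ∘L adjoint T) y - (T ∘L adjoint T) z := by
      simp [map_sub]
    rw [h1, h2, ← h4]
    exact h3
  -- total boundedness
  rw [Metric.totallyBounded_iff]
  intro ε hε
  have hTB : TotallyBounded ((T ∘L adjoint T) '' closedBall (0:H) 1) := by
    obtain ⟨M, hMc, hM⟩ := hTT.image_closedBall_subset_compact 1
    exact (hMc.totallyBounded).subset hM
  obtain ⟨t, hts, htf, hcov⟩ := totallyBounded_iff_subset.mp hTB _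
    (dist_mem_uniformity (α := H) (show (0:ℝ) < ε^2/4 by positivity))
  -- choose preimages
  classical
  refine ⟨(fun c => if hc : ∃ y ∈ closedBall (0:H) 1, (T ∘L adjoint T) y = c then
      adjoint T hc.choose else 0) '' t, htf.image _, ?_⟩
  rintro _ ⟨y, hy, rfl⟩
  have hyc : (T ∘L adjoint T) y ∈ ⋃ c ∈ t, {x | dist x c < ε^2/4} := hcov ⟨y, hy, rfl⟩
  simp only [Set.mem_iUnion, Set.mem_setOf_eq] at hyc
  obtain ⟨c, hct, hdc⟩ := hyc
  have hc : ∃ y ∈ closedBall (0:H) 1, (T ∘L adjoint T) y = c := hts hct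
  obtain ⟨hzball, hzc⟩ := hc.choose_spec
  set z := hc.choose with hz
  refine Set.mem_iUnion₂.mpr ⟨_, Set.mem_image_of_mem _ hct, ?_⟩
  rw [dif_pos hc]
  rw [mem_ball, dist_eq_norm]
  have hkey := key y z
  have hyz : ‖y - z‖ ≤ 2 := by
    calc ‖y - z‖ ≤ ‖y‖ + ‖z‖ := norm_sub_le _ _
      _ ≤ 1 + 1 := add_le_add (by simpa [dist_eq_norm] using mem_closedBall.mp hy)
          (by simpa [dist_eq_norm] using mem_closedBall.mp hzball)
      _ = 2 := by norm_num
  have hTTz : ‖(T ∘L adjoint T) y - (T ∘L adjoint T) z‖ < ε^2/4 := by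
    rw [hzc]
    rwa [dist_eq_norm] at hdc
  have h2 : ‖adjoint T y - adjoint T z‖ ^ 2 < ε ^ 2 := by
    calc ‖adjoint T y - adjoint T z‖ ^ 2 ≤
        ‖(T ∘L adjoint T) y - (T ∘L adjoint T) z‖ * ‖y - z‖ := hkey
      _ ≤ ‖(T ∘L adjoint T) y - (T ∘L adjoint T) z‖ * 2 := by
          refine mul_le_mul_of_nonneg_left hyz (norm_nonneg _)
      _ < (ε^2/4) * 2 := by
          refine mul_lt_mul_of_pos_right hTTz (by norm_num)
      _ ≤ ε ^ 2 := by nlinarith [hε.le]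
  nlinarith [norm_nonneg (adjoint T y - adjoint T z), hε]

lemma exists_bound_on_orthogonal (F B₀ : H →L[ℂ] H)
    (hK : IsCompactOperator ⇑(1 - B₀ * F)) :
    ∃ c > 0, ∀ x : ↥((LinearMap.ker (F : H →ₗ[ℂ] H))ᗮ), ‖(x:H)‖ ≤ c * ‖F x‖ := by
  by_contra hcon
  push_neg at hcon
  choose u hu using fun n : ℕ => hcon (n+1) (by positivity)
  have hu0 : ∀ n, (u n : H) ≠ 0 := by
    intro n h0
    have h1 := hu n
    rw [h0] at h1
    simp at h1
  set x : ℕ → H := fun n => ((‖(u n : H)‖ : ℂ))⁻¹ • (u n : H) with hx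
  have hxnorm : ∀ n, ‖x n‖ = 1 := by
    intro n
    rw [hx]
    simp only [norm_smul, norm_inv, Complex.norm_real, abs_norm, Real.norm_eq_abs]
    exact inv_mul_cancel₀ (norm_ne_zero_iff.mpr (hu0 n))
  have hxmem : ∀ n, x n ∈ (LinearMap.ker (F : H →ₗ[ℂ] H))ᗮ := fun n =>
    Submodule.smul_mem _ _ (u n).2
  have hxF : ∀ n, ‖F (x n)‖ ≤ 1 / (n+1) := by
    intro n
    have hFx : ‖F (x n)‖ = ‖(u n : H)‖⁻¹ * ‖F ↑(u n)‖ := by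
      rw [hx]
      simp only [map_smul, norm_smul, norm_inv, Complex.norm_real, Real.norm_eq_abs, abs_norm]
    have h1 := hu n
    have h2 : (0:ℝ) < ‖(u n : H)‖ := norm_pos_iff.mpr (hu0 n)
    rw [hFx, inv_mul_le_iff₀ h2, mul_one_div,
      le_div_iff₀ (by positivity : (0:ℝ) < (n:ℝ)+1)]
    nlinarith [h1]
  obtain ⟨M, hMc, hKM⟩ := hK.image_closedBall_subset_compact 1
  have hxball : ∀ n, x n ∈ Metric.closedBall (0:H) 1 := by
    intro n
    rw [Metric.mem_closedBall, dist_eq_norm, sub_zero, hxnorm n]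
  have hKmem : ∀ n, (1 - B₀ * F) (x n) ∈ M := fun n => hKM ⟨x n, hxball n, rfl⟩
  obtain ⟨a, _, φ, hφ, hconv⟩ := hMc.isSeqCompact hKmem
  have hB0F : Filter.Tendsto (fun n => (B₀ * F) (x (φ n))) Filter.atTop (nhds 0) := by
    refine squeeze_zero_norm (a := fun n : ℕ => ‖B₀‖ * (1/(n+1))) (fun n => ?_) ?_
    · calc ‖(B₀ * F) (x (φ n))‖ = ‖B₀ (F (x (φ n)))‖ := rfl
        _ ≤ ‖B₀‖ * ‖F (x (φ n))‖ := le_opNorm _ _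
        _ ≤ ‖B₀‖ * (1/(φ n + 1)) := by
            refine mul_le_mul_of_nonneg_left (hxF (φ n)) (norm_nonneg _)
        _ ≤ ‖B₀‖ * (1/(n+1)) := by
            refine mul_le_mul_of_nonneg_left ?_ (norm_nonneg _)
            refine one_div_le_one_div_of_le (by positivity) ?_
            have : (n:ℝ) ≤ φ n := by exact_mod_cast hφ.le_apply
            linarith
    · have := tendsto_one_div_add_atTop_nhds_zero_nat (𝕜 := ℝ)
      simpa using (this.const_mul ‖B₀‖)
  have hxa : Filter.Tendsto (fun n => x (φ n)) Filter.atTop (nhds a) := by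
    have heq : ∀ n, x (φ n) = (B₀ * F) (x (φ n)) + (1 - B₀ * F) (x (φ n)) := by
      intro n
      simp [ContinuousLinearMap.sub_apply]
    have := hB0F.add hconv
    rw [zero_add] at this
    exact this.congr (fun n => (heq n).symm)
  have hamem : a ∈ (LinearMap.ker (F : H →ₗ[ℂ] H))ᗮ := by
    have hclosed : IsClosed ((LinearMap.ker (F : H →ₗ[ℂ] H))ᗮ : Set H) := Submodule.isClosed_orthogonal _
    exact hclosed.mem_of_tendsto hxa (Filter.Eventually.of_forall (fun n => hxmem (φ n)))
  have hanorm : ‖a‖ = 1 := by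
    have := (continuous_norm.tendsto a).comp hxa
    have h2 : Filter.Tendsto (fun n => ‖x (φ n)‖) Filter.atTop (nhds 1) := by
      simpa [hxnorm] using tendsto_const_nhds (x := (1:ℝ)) (f := Filter.atTop (α := ℕ))
    exact tendsto_nhds_unique this h2
  have haF : F a = 0 := by
    have h1 : Filter.Tendsto (fun n => F (x (φ n))) Filter.atTop (nhds (F a)) :=
      (F.continuous.tendsto a).comp hxa
    have h2 : Filter.Tendsto (fun n => F (x (φ n))) Filter.atTop (nhds 0) := by
      refine squeeze_zero_norm (a := fun n : ℕ => 1/(n+1)) (fun n => ?_) ?_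
      · refine le_trans (hxF (φ n)) ?_
        refine one_div_le_one_div_of_le (by positivity) ?_
        have : (n:ℝ) ≤ φ n := by exact_mod_cast hφ.le_apply
        linarith
      · exact tendsto_one_div_add_atTop_nhds_zero_nat
    exact tendsto_nhds_unique h1 h2
  have : a = 0 := by
    rw [← inner_self_eq_zero (𝕜 := ℂ)]
    exact (Submodule.mem_orthogonal _ a).mp hamem a haF
  rw [this, norm_zero] at hanorm
  norm_num at hanorm

lemma isClosed_range_of_bound (F : H →L[ℂ] H) {c : ℝ}
    [HasOrthogonalProjection (LinearMap.ker (F : H →ₗ[ℂ] H))]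
    (hb : ∀ x : ↥((LinearMap.ker (F : H →ₗ[ℂ] H))ᗮ), ‖(x:H)‖ ≤ c * ‖F x‖) :
    IsClosed ((LinearMap.range (F : H →ₗ[ℂ] H) : Submodule ℂ H) : Set H) := by
  set g : ↥((LinearMap.ker (F : H →ₗ[ℂ] H))ᗮ) →L[ℂ] H := F ∘L (LinearMap.ker (F : H →ₗ[ℂ] H))ᗮ.subtypeL with hg
  have hrange : ((LinearMap.range (F : H →ₗ[ℂ] H) : Submodule ℂ H) : Set H) = Set.range g := by
    ext z
    constructor
    · rintro ⟨y, rfl⟩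
      refine ⟨⟨y - ↑(orthogonalProjection (LinearMap.ker (F : H →ₗ[ℂ] H)) y),
        sub_starProjection_mem_orthogonal y⟩, ?_⟩
      have hker : F ↑(orthogonalProjection (LinearMap.ker (F : H →ₗ[ℂ] H)) y) = 0 :=
        (orthogonalProjection (LinearMap.ker (F : H →ₗ[ℂ] H)) y).2
      show F (y - ↑(orthogonalProjection (LinearMap.ker (F : H →ₗ[ℂ] H)) y)) = F y
      rw [map_sub, hker, sub_zero]
    · rintro ⟨w, rfl⟩
      exact ⟨↑w, rfl⟩
  rw [hrange]
  have hanti : AntilipschitzWith c.toNNReal g := by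
    refine ContinuousLinearMap.antilipschitz_of_bound g (fun w => ?_)
    have := hb w
    rw [Real.coe_toNNReal']
    refine le_trans this ?_
    refine mul_le_mul_of_nonneg_right (le_max_left _ _) (norm_nonneg _)
  exact hanti.isClosed_range g.uniformContinuous

end Analytic


/-- The Fredholm index is locally constant: for `F` Fredholm and `B`
bounded, `F + εB` is Fredholm with the same index for all sufficiently small `ε > 0`. -/
theorem isFredholm_small_perturbation {H : Type*} [NormedAddCommGroup H]
    [InnerProductSpace ℂ H] [CompleteSpace H] [TopologicalSpace.SeparableSpace H]
    (F B : H →L[ℂ] H) (hF : _root_.IsFredholm F) :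
    ∃ ε₀ > 0, ∀ ε : ℝ, 0 < ε → ε < ε₀ →
      _root_.IsFredholm (F + (ε : ℂ) • B) ∧ fredholmIndex (F + (ε : ℂ) • B) = fredholmIndex F := by
  obtain ⟨B₀, hK₁, hK₂⟩ := hF
  set N := LinearMap.ker (F : H →ₗ[ℂ] H) with hN
  set R := LinearMap.range (F : H →ₗ[ℂ] H) with hR
  -- finite-dimensional kernel
  haveI hker : FiniteDimensional ℂ N := by
    refine finiteDimensional_ker F (1 - B₀ * F) hK₂ (fun x hx => ?_)
    have hx' : F x = 0 := hx
    simp [ContinuousLinearMap.sub_apply, ContinuousLinearMap.mul_apply, hx']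
  -- finite-dimensional cokernel
  haveI hkerAdj : FiniteDimensional ℂ (LinearMap.ker (adjoint F : H →ₗ[ℂ] H)) := by
    refine finiteDimensional_ker (adjoint F) (adjoint (1 - F * B₀))
      (isCompactOperator_adjoint _ hK₁) (fun x hx => ?_)
    have hx' : adjoint F x = 0 := hx
    have hadj : adjoint (1 - F * B₀) = 1 - adjoint B₀ * adjoint F := by
      have : (1 : H →L[ℂ] H) - F * B₀ = 1 - F ∘L B₀ := rfl
      rw [this, map_sub, adjoint_comp]
      congr 1
      exact adjoint_id
    rw [hadj]
    simp [ContinuousLinearMap.sub_apply, ContinuousLinearMap.mul_apply, hx']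
  -- closed range
  obtain ⟨c, hc, hb⟩ := exists_bound_on_orthogonal F B₀ hK₂
  have hRclosed : IsClosed ((R : Submodule ℂ H) : Set H) := isClosed_range_of_bound F hb
  haveI : CompleteSpace R := hRclosed.completeSpace_coe
  have hW : Rᗮ = LinearMap.ker (adjoint F : H →ₗ[ℂ] H) := (ker_adjoint_eq F).symm
  haveI : FiniteDimensional ℂ ↥(Rᗮ) := by rw [hW]; exact hkerAdj
  -- the invertible block of F
  set f : ↥(Nᗮ) →L[ℂ] ↥R := (orthogonalProjection R) ∘L (F ∘L (Nᗮ).subtypeL) with hf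
  have hfker : LinearMap.ker (f : ↥(Nᗮ) →ₗ[ℂ] ↥R) = ⊥ := by
    rw [LinearMap.ker_eq_bot']
    intro m hm
    have h1 : F ↑m ∈ R := ⟨↑m, rfl⟩
    have h2 : (orthogonalProjection R (F ↑m) : H) = F ↑m := starProjection_eq_self_iff.mpr h1
    have h3 : F ↑m = 0 := by
      rw [← h2]
      exact congrArg Subtype.val hm
    have h4 : (↑m : H) ∈ N := h3
    have h6 : ⟪(↑m : H), (↑m : H)⟫ = 0 := (Submodule.mem_orthogonal _ _).mp m.2 ↑m h4
    exact Subtype.ext (inner_self_eq_zero.mp h6)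
  have hfrange : LinearMap.range (f : ↥(Nᗮ) →ₗ[ℂ] ↥R) = ⊤ := by
    rw [LinearMap.range_eq_top]
    rintro r
    obtain ⟨y, hy⟩ := r.2
    refine ⟨⟨y - ↑(orthogonalProjection N y), sub_starProjection_mem_orthogonal y⟩, ?_⟩
    apply Subtype.ext
    show (orthogonalProjection R (F (y - ↑(orthogonalProjection N y))) : H) = ↑r
    have hker0 : F ↑(orthogonalProjection N y) = 0 := (orthogonalProjection N y).2
    rw [map_sub, hker0, sub_zero, show F y = ↑r from hy]
    exact starProjection_eq_self_iff.mpr r.2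
  set e : ↥(Nᗮ) ≃L[ℂ] ↥R := ContinuousLinearEquiv.ofBijective f hfker hfrange with he
  have hee : ∀ x : ↥(Nᗮ), e x = orthogonalProjection R (F ↑x) := fun x => rfl
  -- perturbation data
  set C : ↥(Nᗮ) →L[ℂ] ↥(Nᗮ) :=
    (e.symm : ↥R →L[ℂ] ↥(Nᗮ)) ∘L ((orthogonalProjection R) ∘L (B ∘L (Nᗮ).subtypeL)) with hC
  refine ⟨min (‖C‖+1)⁻¹ (min (‖B * B₀‖+1)⁻¹ (‖B₀ * B‖+1)⁻¹), by positivity, fun ε hε hεlt => ?_⟩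
  have hεC : ε * ‖C‖ < 1 := by
    have h1 : ε < (‖C‖+1)⁻¹ := lt_of_lt_of_le hεlt (min_le_left _ _)
    have h2 : (0:ℝ) < ‖C‖ + 1 := by positivity
    nlinarith [norm_nonneg C, (inv_pos.mpr h2).le, mul_lt_mul_of_pos_right h1 h2,
      inv_mul_cancel₀ h2.ne']
  have hε1 : ε * ‖B * B₀‖ < 1 := by
    have h1 : ε < (‖B * B₀‖+1)⁻¹ := lt_of_lt_of_le hεlt
      (le_trans (min_le_right _ _) (min_le_left _ _))
    have h2 : (0:ℝ) < ‖B * B₀‖ + 1 := by positivity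
    nlinarith [norm_nonneg (B * B₀), mul_lt_mul_of_pos_right h1 h2, inv_mul_cancel₀ h2.ne']
  have hε2 : ε * ‖B₀ * B‖ < 1 := by
    have h1 : ε < (‖B₀ * B‖+1)⁻¹ := lt_of_lt_of_le hεlt
      (le_trans (min_le_right _ _) (min_le_right _ _))
    have h2 : (0:ℝ) < ‖B₀ * B‖ + 1 := by positivity
    nlinarith [norm_nonneg (B₀ * B), mul_lt_mul_of_pos_right h1 h2, inv_mul_cancel₀ h2.ne']
  have hεnorm : ‖(ε : ℂ)‖ = ε := by
    rw [Complex.norm_real, Real.norm_eq_abs, abs_of_pos hε]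
  set G := F + (ε : ℂ) • B with hG
  constructor
  · -- Fredholm
    set K₁ := (1 : H →L[ℂ] H) - F * B₀ with hK₁def
    set K₂ := (1 : H →L[ℂ] H) - B₀ * F with hK₂def
    have hu₁norm : ‖-((ε:ℂ) • (B * B₀))‖ < 1 := by
      rw [norm_neg, norm_smul, hεnorm]; exact hε1
    have hu₂norm : ‖-((ε:ℂ) • (B₀ * B))‖ < 1 := by
      rw [norm_neg, norm_smul, hεnorm]; exact hε2
    set u₁ : (H →L[ℂ] H)ˣ := Units.oneSub _ hu₁norm with hu₁
    set u₂ : (H →L[ℂ] H)ˣ := Units.oneSub _ hu₂norm with hu₂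
    have hu₁val : (u₁ : H →L[ℂ] H) = 1 + (ε:ℂ) • (B * B₀) := by
      rw [hu₁, Units.val_oneSub, sub_neg_eq_add]
    have hu₂val : (u₂ : H →L[ℂ] H) = 1 + (ε:ℂ) • (B₀ * B) := by
      rw [hu₂, Units.val_oneSub, sub_neg_eq_add]
    set D := B₀ * ↑u₁⁻¹ with hD
    set C' := (↑u₂⁻¹ : H →L[ℂ] H) * B₀ with hC'
    set L := (↑u₂⁻¹ : H →L[ℂ] H) * K₂ with hL
    set Rk := K₁ * (↑u₁⁻¹ : H →L[ℂ] H) with hRk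
    have hGB₀ : G * B₀ = ↑u₁ - K₁ := by
      rw [hG, add_mul, smul_mul_assoc, hu₁val, hK₁def]
      abel
    have hB₀G : B₀ * G = ↑u₂ - K₂ := by
      rw [hG, mul_add, mul_smul_comm, hu₂val, hK₂def]
      abel
    have hGD : G * D = 1 - Rk := by
      rw [hD, ← mul_assoc, hGB₀, sub_mul, Units.mul_inv, hRk]
    have hCG : C' * G = 1 - L := by
      rw [hC', mul_assoc, hB₀G, mul_sub, Units.inv_mul, hL]
    have h6 : C' * (G * D) = (C' * G) * D := (mul_assoc C' G D).symm
    rw [hGD, hCG] at h6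
    have h5 : C' - D = C' * Rk - L * D := by
      rw [mul_sub, mul_one, sub_mul, one_mul] at h6
      rw [sub_eq_sub_iff_sub_eq_sub] at h6
      exact h6
    have hL' : IsCompactOperator ⇑L := hK₂.clm_comp (↑u₂⁻¹ : H →L[ℂ] H)
    have hRk' : IsCompactOperator ⇑Rk := hK₁.comp_clm (↑u₁⁻¹ : H →L[ℂ] H)
    refine ⟨D, ?_, ?_⟩
    · have : (1 : H →L[ℂ] H) - G * D = Rk := by rw [hGD]; abel
      rw [this]
      exact hRk'
    · have key : (1 : H →L[ℂ] H) - D * G = L + ((C' * Rk) * G - (L * D) * G) := by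
        have h7 : (C' - D) * G = C' * G - D * G := sub_mul _ _ _
        rw [h5] at h7
        rw [hCG] at h7
        rw [sub_mul] at h7
        -- h7 : C'*Rk*G - L*D*G = (1 - L) - D*G
        rw [h7]
        abel
      rw [key]
      refine hL'.add ?_
      refine IsCompactOperator.sub ?_ ?_
      · exact (hRk'.clm_comp C').comp_clm G
      · exact ((hL'.comp_clm D).comp_clm G : IsCompactOperator (⇑(L * D) ∘ ⇑G))
  · -- index equality
    haveI : IsBoundedSMul ℂ (↥(Nᗮ) →L[ℂ] ↥(Nᗮ)) := by exact NormedSpace.toIsBoundedSMul (𝕜 := ℂ) (E := ↥(Nᗮ) →L[ℂ] ↥(Nᗮ))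
    have hεC'' : ‖(ε:ℂ) • C‖ < 1 := by
      refine lt_of_le_of_lt (norm_smul_le (ε:ℂ) C) ?_
      rw [Complex.norm_real, Real.norm_eq_abs, abs_of_pos hε]
      exact hεC
    set u : (↥(Nᗮ) →L[ℂ] ↥(Nᗮ))ˣ := Units.oneSub (-((ε:ℂ) • C))
      ((norm_neg ((ε:ℂ) • C)).trans_lt hεC'') with hu
    have huval : (u : ↥(Nᗮ) →L[ℂ] ↥(Nᗮ)) = 1 + (ε:ℂ) • C := by
      rw [hu, Units.val_oneSub, sub_neg_eq_add]
    set w : ↥(Nᗮ) ≃L[ℂ] ↥(Nᗮ) := ContinuousLinearEquiv.equivOfInverse (↑u) (↑u⁻¹)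
      (fun x => by
        change ((↑u⁻¹ * ↑u : ↥(Nᗮ) →L[ℂ] ↥(Nᗮ))) x = x
        rw [u.inv_mul]; rfl)
      (fun x => by
        change ((↑u * ↑u⁻¹ : ↥(Nᗮ) →L[ℂ] ↥(Nᗮ))) x = x
        rw [u.mul_inv]; rfl) with hw
    set e' : ↥(Nᗮ) ≃L[ℂ] ↥R := w.trans e with he'
    have hee' : ∀ x : ↥(Nᗮ), e' x = orthogonalProjection R (G ↑x) := by
      intro x
      have h1 : e' x = e (w x) := rfl
      have h2 : w x = x + (ε:ℂ) • (C x) := by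
        show (↑u : ↥(Nᗮ) →L[ℂ] ↥(Nᗮ)) x = x + (ε:ℂ) • (C x)
        rw [huval]
        simp [ContinuousLinearMap.add_apply, ContinuousLinearMap.smul_apply]
      have h3 : e (C x) = orthogonalProjection R (B ↑x) := by
        rw [hC]
        simp only [ContinuousLinearMap.comp_apply]
        exact e.apply_symm_apply _
      have h4 : G ↑x = F ↑x + (ε:ℂ) • (B ↑x) := rfl
      rw [h1, h2, map_add, map_smul, hee x, h3, h4, map_add, map_smul]
    have hidx1 := index_eq N R F e hee
    have hidx2 := index_eq N R G e' hee'
    rw [hidx1, hidx2]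
end

section
/- If a complex polynomial p of degree ≤ n has some root on the unit circle, then the operator A = p(a) (where a is the unilateral shift) is not Fredholm. -/
open ContinuousLinearMap

/-- `ℓ²(ℕ)`. -/
noncomputable abbrev ℓ2 : Type := lp (fun _ : ℕ => ℂ) 2

/-- The canonical orthonormal basis vectors of `ℓ²(ℕ)`. -/
noncomputable def e (n : ℕ) : ℓ2 := lp.single 2 n 1

/-- `a` is the unilateral (left) shift: `a e₀ = 0` and `a eₙ = eₙ₋₁` for `n > 0`. -/
def IsUnilateralShift (a : ℓ2 →L[ℂ] ℓ2) : Prop :=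
  a (e 0) = 0 ∧ ∀ n : ℕ, a (e (n + 1)) = e n

open scoped InnerProductSpace

lemma orthonormal_e : Orthonormal ℂ e := by
  rw [orthonormal_iff_ite]
  intro i j
  classical
  rw [e, e, lp.inner_single_left, lp.single_apply]
  by_cases h : i = j
  · subst h; simp
  · rw [if_neg h]; simp [Pi.single_apply, h]


set_option maxHeartbeats 1000000 in
set_option synthInstance.maxHeartbeats 1000000 in
/-- If a complex polynomial `p` of degree at most `n` has a root on
the unit circle, then `A = p(a)` is not Fredholm. -/
theorem aeval_shift_not_fredholm (a : ℓ2 →L[ℂ] ℓ2) (ha : IsUnilateralShift a)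
    (n : ℕ) (p : Polynomial ℂ) (hdeg : p.natDegree ≤ n)
    (hroot : ∃ z : ℂ, ‖z‖ = 1 ∧ p.IsRoot z) :
    ¬ _root_.IsFredholm (Polynomial.aeval a p) := by
  classical
  obtain ⟨z, hz, hzr⟩ := hroot
  rintro ⟨B, -, hB⟩
  obtain ⟨q, hq⟩ := (Polynomial.dvd_iff_isRoot.mpr hzr)
  set T : ℓ2 →L[ℂ] ℓ2 := a - z • 1 with hT
  have hfact : Polynomial.aeval a p = Polynomial.aeval a q * T := by
    rw [hq, mul_comm (Polynomial.X - Polynomial.C z) q, map_mul]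
    congr 1
    simp [hT, Algebra.algebraMap_eq_smul_one]
  set C : ℓ2 →L[ℂ] ℓ2 := B * Polynomial.aeval a q with hC
  have h1 : (1 : ℓ2 →L[ℂ] ℓ2) - C * T = 1 - B * Polynomial.aeval a p := by
    rw [hfact, hC, mul_assoc]
  have hK : IsCompactOperator ⇑((1 : ℓ2 →L[ℂ] ℓ2) - C * T) := h1 ▸ hB
  -- the approximate kernel vectors
  set N : ℕ → ℕ := fun k => k * k + 2 * k + 1 with hN
  set f : ℕ → ℓ2 := fun k => ∑ m ∈ Finset.range (k + 1), z ^ (N k + m) • e (N k + m) with hf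
  set s : ℕ → ℝ := fun k => (Real.sqrt (k + 1))⁻¹ with hs
  set w : ℕ → ℓ2 := fun k => (s k : ℂ) • f k with hw
  have hzpow : ∀ m : ℕ, ‖z ^ m‖ = 1 := by
    intro m; rw [norm_pow, hz, one_pow]
  have hsqrt_pos : ∀ k : ℕ, (0:ℝ) < Real.sqrt (k + 1) := by
    intro k; positivity
  have hs_pos : ∀ k : ℕ, (0:ℝ) < s k := fun k => inv_pos.mpr (hsqrt_pos k)
  -- disjoint supports
  have hdisj : ∀ {j k mj mk : ℕ}, j ≠ k → mj < j + 1 → mk < k + 1 →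
      N j + mj ≠ N k + mk := by
    intro j k mj mk hjk hmj hmk
    rcases lt_or_gt_of_ne hjk with h | h
    · have : j + 1 ≤ k := h
      simp only [hN]; nlinarith
    · have : k + 1 ≤ j := h
      simp only [hN]; nlinarith
  -- inner products
  have hinner : ∀ j k : ℕ, j ≠ k → ⟪f j, f k⟫_ℂ = 0 := by
    intro j k hjk
    rw [hf]
    simp only [sum_inner, inner_sum]
    refine Finset.sum_eq_zero fun m1 h1 => Finset.sum_eq_zero fun m2 h2 => ?_
    rw [inner_smul_left, inner_smul_right, orthonormal_iff_ite.mp orthonormal_e,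
      if_neg (hdisj hjk (Finset.mem_range.mp h2) (Finset.mem_range.mp h1))]
    ring
  have hfnorm : ∀ k : ℕ, ‖f k‖ ^ 2 = (k + 1 : ℝ) := by
    intro k
    have horth : Orthonormal ℂ (fun m : ℕ => e (N k + m)) :=
      orthonormal_e.comp _ (fun x y hxy => by omega)
    have h2 : ⟪f k, f k⟫_ℂ = ((k : ℂ) + 1) := by
      rw [hf]
      rw [horth.inner_sum (fun m => z ^ (N k + m)) (fun m => z ^ (N k + m)) (Finset.range (k+1))]
      have : ∀ m ∈ Finset.range (k + 1),
          (starRingEnd ℂ) (z ^ (N k + m)) * z ^ (N k + m) = 1 := by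
        intro m _
        rw [RCLike.conj_mul, hzpow]
        norm_num
      rw [Finset.sum_congr rfl this]
      simp
    have h3 := inner_self_eq_norm_sq (𝕜 := ℂ) (f k)
    rw [h2] at h3
    rw [← h3]
    simp
  have hwnorm : ∀ k : ℕ, ‖w k‖ = 1 := by
    intro k
    have hf' : ‖f k‖ = Real.sqrt (k + 1) := by
      rw [← Real.sqrt_sq (norm_nonneg (f k)), hfnorm k]
    rw [hw]
    rw [norm_smul, hf']
    simp only [Complex.norm_real, Real.norm_eq_abs, abs_of_pos (hs_pos k), hs,
      abs_of_pos (inv_pos.mpr (hsqrt_pos k))]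
    exact inv_mul_cancel₀ (ne_of_gt (hsqrt_pos k))
  -- distance between distinct w's
  have hdist : ∀ j k : ℕ, j ≠ k → (1:ℝ) ≤ ‖w j - w k‖ := by
    intro j k hjk
    have hwi : ⟪w j, w k⟫_ℂ = 0 := by
      rw [hw]
      simp only [inner_smul_left, inner_smul_right, hinner j k hjk, mul_zero]
    have hsq : ‖w j - w k‖ ^ 2 = 2 := by
      rw [norm_sub_sq (𝕜 := ℂ), hwi, hwnorm, hwnorm]
      norm_num
    have h0 : (0:ℝ) ≤ ‖w j - w k‖ := norm_nonneg _
    have h2 : ‖w j - w k‖ = Real.sqrt 2 := by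
      rw [← hsq, Real.sqrt_sq h0]
    rw [h2, show (1:ℝ) = Real.sqrt 1 from Real.sqrt_one.symm]
    exact Real.sqrt_le_sqrt (by norm_num)
  -- T on w k is small
  have hTf : ∀ k : ℕ, T (f k) = z ^ (N k) • e (k * k + 2 * k)
      - z ^ (N k + k + 1) • e (N k + k) := by
    intro k
    have key : ∀ m : ℕ, a (e (N k + m)) = e (k * k + 2 * k + m) := by
      intro m
      have hx : N k + m = (k * k + 2 * k + m) + 1 := by simp only [hN]; ring
      rw [hx, ha.2]
    set g : ℕ → ℓ2 := fun m => z ^ (N k + m) • e (k * k + 2 * k + m) with hg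
    have haf : a (f k) = ∑ m ∈ Finset.range (k + 1), g m := by
      rw [hf, map_sum]
      refine Finset.sum_congr rfl fun m _ => ?_
      rw [map_smul, key]
    have hzf : z • f k = ∑ m ∈ Finset.range (k + 1), g (m + 1) := by
      rw [hf, Finset.smul_sum]
      refine Finset.sum_congr rfl fun m _ => ?_
      rw [smul_smul]
      simp only [hg]
      have h1 : z * z ^ (N k + m) = z ^ (N k + (m + 1)) := by ring
      have h2 : N k + m = k * k + 2 * k + (m + 1) := by simp only [hN]; ring
      rw [h1, h2]
    have hTfk : T (f k) = a (f k) - z • f k := by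
      rw [hT]; simp [sub_smul]
    rw [hTfk, haf, hzf, Finset.sum_range_succ' g k, Finset.sum_range_succ (fun m => g (m+1)) k]
    have e1 : g 0 = z ^ (N k) • e (k * k + 2 * k) := by simp [hg]
    have e2 : g (k + 1) = z ^ (N k + k + 1) • e (N k + k) := by
      simp only [hg]
      have hx1 : N k + (k + 1) = N k + k + 1 := by omega
      have hx2 : k * k + 2 * k + (k + 1) = N k + k := by simp only [hN]; ring
      rw [hx1, hx2]
    rw [e1, e2]
    abel
  have hTw : ∀ k : ℕ, ‖T (w k)‖ ≤ 2 * s k := by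
    intro k
    rw [hw, map_smul, norm_smul, hTf k]
    have h1 : ‖z ^ (N k) • e (k * k + 2 * k) - z ^ (N k + k + 1) • e (N k + k)‖ ≤ 2 := by
      refine (norm_sub_le _ _).trans ?_
      rw [norm_smul, norm_smul, hzpow, hzpow, orthonormal_e.1, orthonormal_e.1]
      norm_num
    have h2 : ‖((s k : ℝ) : ℂ)‖ = s k := by
      simp [Complex.norm_real, abs_of_pos (hs_pos k)]
    rw [h2]
    calc s k * ‖_ - _‖ ≤ s k * 2 :=
          mul_le_mul_of_nonneg_left h1 (le_of_lt (hs_pos k))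
      _ = 2 * s k := by ring
  -- compactness: extract convergent subsequence
  set u : ℕ → ℓ2 := fun k => ((1 : ℓ2 →L[ℂ] ℓ2) - C * T) (w k) with hu
  have hK' : IsCompactOperator ⇑(((1 : ℓ2 →L[ℂ] ℓ2) - C * T).toLinearMap) := hK
  obtain ⟨S, hScomp, hSsub⟩ := hK'.image_closedBall_subset_compact (𝕜₁ := ℂ) 1
  have huS : ∀ k, u k ∈ S := by
    intro k
    apply hSsub
    exact ⟨w k, by simp [Metric.mem_closedBall, dist_zero_right, hwnorm k], rfl⟩
  obtain ⟨x, -, φ, hφmono, hφlim⟩ := hScomp.tendsto_subseq huS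
  -- w k - u k → 0
  have hwu : ∀ k, ‖w k - u k‖ ≤ ‖C‖ * (2 * s k) := by
    intro k
    have hrw : w k - u k = C (T (w k)) := by
      rw [hu]
      simp [sub_apply, mul_apply, sub_sub_cancel]
    rw [hrw]
    exact (C.le_opNorm _).trans (mul_le_mul_of_nonneg_left (hTw k) (norm_nonneg C))
  have hs0 : Filter.Tendsto s Filter.atTop (nhds 0) := by
    have h1 : Filter.Tendsto (fun x : ℝ => x ^ (-(1/2 : ℝ))) Filter.atTop (nhds 0) :=
      tendsto_rpow_neg_atTop (by norm_num)
    have h2 : Filter.Tendsto (fun k : ℕ => (k : ℝ) + 1) Filter.atTop Filter.atTop :=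
      Filter.tendsto_atTop_add_const_right _ 1 tendsto_natCast_atTop_atTop
    refine (h1.comp h2).congr fun k => ?_
    simp only [Function.comp_apply, hs]
    rw [Real.rpow_neg (by positivity), ← Real.sqrt_eq_rpow]
  have hwu0 : Filter.Tendsto (fun k => w k - u k) Filter.atTop (nhds 0) := by
    apply squeeze_zero_norm hwu
    have := hs0.const_mul (‖C‖ * 2)
    simpa [mul_assoc] using this
  have hφ : Filter.Tendsto φ Filter.atTop Filter.atTop := hφmono.tendsto_atTop
  have hwφ : Filter.Tendsto (fun m => w (φ m)) Filter.atTop (nhds x) := by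
    have h1 : Filter.Tendsto (fun m => w (φ m) - u (φ m)) Filter.atTop (nhds 0) :=
      hwu0.comp hφ
    have h2 := h1.add hφlim
    simpa using h2
  have hsucc : Filter.Tendsto (fun m => w (φ (m + 1))) Filter.atTop (nhds x) :=
    hwφ.comp (Filter.tendsto_add_atTop_nat 1)
  have hd : Filter.Tendsto (fun m => dist (w (φ m)) (w (φ (m + 1)))) Filter.atTop
      (nhds (dist x x)) := hwφ.dist hsucc
  have hge : (1:ℝ) ≤ dist x x := by
    refine ge_of_tendsto' hd fun m => ?_
    rw [dist_eq_norm]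
    exact hdist _ _ (ne_of_lt (hφmono (Nat.lt_succ_self m)))
  rw [dist_self] at hge
  linarith
end
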